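/- Assume 0 ∈ S. For every m ≥ 1 and all a_1, ..., a_m ∈ S, the following identity holds in 𝕀(S)[[t_1, ..., t_m]]: I(a_1; a_2, ..., a_m; 0 | t_1; ...; t_m) = (−1)^{m−1} · I(0; a_m, ..., a_2; a_1 | −t_m; −t_{m−1}; ...; −t_1). In particular, for m = 1, Σ_{n ≥ 0} I(a; 0^n; 0) · t^n = Σ_{n ≥ 0} I(0; 0^n; a) · (−t)^n. -/

import Mathlib

/-!
STATEMENT 11. In `𝕀(S)[[t₁, …, t_m]]` (coefficientwise):
`I(a₁; a₂, …, a_m; 0 | t₁; …; t_m) = (−1)^{m−1} · I(0; a_m, …, a₂; a₁ | −t_m; …; −t₁)`;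
in particular `Σ_{n ≥ 0} I(a; 0ⁿ; 0) tⁿ = Σ_{n ≥ 0} I(0; 0ⁿ; a) (−t)ⁿ`.
(The equality of power series is stated coefficient by coefficient; a sign `(−1)^{Σ nᵢ}`
accounts for the substitution `tᵢ ↦ −tᵢ`.)
-/

open scoped TensorProduct

/-- The multiset of all shuffles of two lists. -/
def shuffles {α : Type*} : List α → List α → Multiset (List α)
  | [], l => {l}
  | x :: l, [] => {x :: l}
  | a :: l, b :: m =>
      ((shuffles l (b :: m)).map (a :: ·)) + ((shuffles (a :: l) m).map (b :: ·))
  termination_by l m => l.length + m.length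

/-- Generators `𝕀(s₀; s₁, …, s_m; s_{m+1})`, `m ≥ 1`. -/
abbrev IGen (S : Type*) := S × {l : List S // l ≠ []} × S

/-- The free commutative ℚ-algebra `𝕀̃(S)`. -/
abbrev Itilde (S : Type*) := MvPolynomial (IGen S) ℚ

/-- The element `𝕀(a; l; b)` of `𝕀̃(S)`, with the convention `𝕀(a; b) = 1`. -/
noncomputable def ISym {S : Type*} (a : S) (l : List S) (b : S) : Itilde S :=
  match l with
  | [] => 1
  | x :: xs => MvPolynomial.X (a, ⟨x :: xs, by simp⟩, b)

/-- All markings of a list: decompositions `l = b₀ ++ [c₁] ++ b₁ ++ … ++ [c_k] ++ b_k`. -/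
def marks {α : Type*} : List α → List (List α × List (List α))
  | [] => [([], [[]])]
  | x :: l =>
      ((marks l).map fun p => (x :: p.1, [] :: p.2)) ++
      ((marks l).map fun p => (p.1, (x :: p.2.headI) :: p.2.tail))

/-- `blockProd f a bs cs b = f(a; b₀; c₁) · f(c₁; b₁; c₂) ⋯ f(c_k; b_k; b)`. -/
def blockProd {S M : Type*} [CommMonoid M] (f : S → List S → S → M) :
    S → List (List S) → List S → S → M
  | _, [], _, _ => 1
  | a, [bl], [], b => f a bl b
  | a, bl :: bls, c :: cs, b => f a bl c * blockProd f c bls cs b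
  | _, _ :: _ :: _, [], _ => 1

/-- The coproduct `Δ` of `𝕀̃(S)` (Goncharov's formula on generators). -/
noncomputable def Delta {S : Type*} : Itilde S →ₐ[ℚ] Itilde S ⊗[ℚ] Itilde S :=
  MvPolynomial.aeval fun g : IGen S =>
    ((marks g.2.1.1).map fun p =>
      ISym g.1 p.1 g.2.2 ⊗ₜ[ℚ] blockProd ISym g.1 p.2 p.1 g.2.2).sum

/-- The ideal of the shuffle, path composition and loop relations. -/
noncomputable def Jideal (S : Type*) : Ideal (Itilde S) :=
  Ideal.span
    ({p | ∃ a b l₁ l₂, p = ISym a l₁ b * ISym a l₂ b -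
        ((shuffles l₁ l₂).map fun w => ISym a w b).sum} ∪
     {p | ∃ a b x l, p = ISym a l b -
        ∑ k ∈ Finset.range (l.length + 1), ISym a (l.take k) x * ISym x (l.drop k) b} ∪
     {p | ∃ a l, l ≠ [] ∧ p = ISym a l a})

/-- The commutative graded Hopf algebra `𝕀(S) := 𝕀̃(S)/J` of iterated integrals. -/
abbrev IS (S : Type*) := Itilde S ⧸ Jideal S

/-- The image `I(a; l; b)` of `𝕀(a; l; b)` in `𝕀(S)`. -/
noncomputable def Imap {S : Type*} (a : S) (l : List S) (b : S) : IS S :=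
  Ideal.Quotient.mk (Jideal S) (ISym a l b)

/-- `wz z n₀ [(a₁,n₁), …, (a_m,n_m)]` is the list `0^{n₀} a₁ 0^{n₁} a₂ ⋯ a_m 0^{n_m}`
(with `z` playing the role of `0`). -/
def wz {S : Type*} (z : S) (n0 : ℕ) (l : List (S × ℕ)) : List S :=
  List.replicate n0 z ++ l.flatMap fun p => p.1 :: List.replicate p.2 z

section basic
variable {S : Type*}

@[simp] lemma shuffles_nil_left {α : Type*} (l : List α) : shuffles ([] : List α) l = {l} := by
  rw [shuffles]

lemma shuffles_nil_right {α : Type*} (l : List α) : shuffles l ([] : List α) = {l} := by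
  cases l <;> rw [shuffles]

lemma shuffles_cons_cons {α : Type*} (a b : α) (l m : List α) :
    shuffles (a :: l) (b :: m) =
      ((shuffles l (b :: m)).map (a :: ·)) + ((shuffles (a :: l) m).map (b :: ·)) := by
  rw [shuffles]

lemma Imap_nil (a b : S) : Imap a [] b = 1 := by
  have : ISym a ([] : List S) b = 1 := rfl
  rw [Imap, this, map_one]

lemma Imap_loop (a : S) (l : List S) (h : l ≠ []) : Imap a l a = 0 :=
  Ideal.Quotient.eq_zero_iff_mem.2
    (Ideal.subset_span (Set.mem_union_right _ ⟨a, l, h, rfl⟩))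

lemma Imap_shuffle (a b : S) (u v : List S) :
    Imap a u b * Imap a v b = ((shuffles u v).map fun w => Imap a w b).sum := by
  have hm : (ISym a u b * ISym a v b - ((shuffles u v).map fun w => ISym a w b).sum)
      ∈ Jideal S :=
    Ideal.subset_span (Set.mem_union_left _ (Set.mem_union_left _ ⟨a, b, u, v, rfl⟩))
  have h0 := Ideal.Quotient.eq_zero_iff_mem.2 hm
  rw [map_sub, sub_eq_zero, map_mul] at h0
  rw [Imap, Imap, h0, map_multiset_sum, Multiset.map_map]
  rfl

lemma Imap_comp (a b x : S) (l : List S) :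
    Imap a l b = ∑ k ∈ Finset.range (l.length + 1),
      Imap a (l.take k) x * Imap x (l.drop k) b := by
  have hm : (ISym a l b - ∑ k ∈ Finset.range (l.length + 1),
      ISym a (l.take k) x * ISym x (l.drop k) b) ∈ Jideal S :=
    Ideal.subset_span (Set.mem_union_left _ (Set.mem_union_right _ ⟨a, b, x, l, rfl⟩))
  have h0 := Ideal.Quotient.eq_zero_iff_mem.2 hm
  rw [map_sub, sub_eq_zero, map_sum] at h0
  rw [Imap, h0]
  simp [Imap, map_mul]

end basic
section tele
variable {S : Type*}

lemma shuffle_rev_alt {R : Type*} [CommRing R] (f : List S → R) (l : List S) (hl : l ≠ []) :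
    ∑ k ∈ Finset.range (l.length + 1),
      (-1 : R) ^ k * ((shuffles ((l.take k).reverse) (l.drop k)).map f).sum = 0 := by
  have hm : 0 < l.length := List.length_pos_iff.2 hl
  set d : S := l.head hl with hd0
  let G : ℕ → R := fun k =>
    if k = 0 ∨ l.length < k then 0
    else (-1 : R) ^ (k - 1) *
      ((shuffles ((l.take (k-1)).reverse) (l.drop k)).map
        fun x => f (l.getD (k-1) d :: x)).sum
  have hG : ∀ k, G k =
      if k = 0 ∨ l.length < k then 0
      else (-1 : R) ^ (k - 1) *
        ((shuffles ((l.take (k-1)).reverse) (l.drop k)).map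
          fun x => f (l.getD (k-1) d :: x)).sum := fun k => rfl
  have key : ∀ k ∈ Finset.range (l.length + 1),
      (-1 : R) ^ k * ((shuffles ((l.take k).reverse) (l.drop k)).map f).sum
        = G (k+1) - G k := by
    intro k hk
    rw [Finset.mem_range] at hk
    have hk' : k ≤ l.length := by omega
    rcases Nat.eq_zero_or_pos k with rfl | hkpos
    · have h1 : G 0 = 0 := by rw [hG]; simp
      have h2 : G 1 = f l := by
        rw [hG, if_neg (by omega : ¬ (1 = 0 ∨ l.length < 1))]
        simp only [Nat.sub_self, List.take_zero, List.reverse_nil, shuffles_nil_left,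
          Multiset.map_singleton, Multiset.sum_singleton, pow_zero, one_mul]
        rw [List.getD_eq_getElem _ _ hm, ← List.drop_eq_getElem_cons hm]
        simp
      rw [h1, h2]
      simp
    obtain rfl | hklt := eq_or_lt_of_le hk'
    · -- k = l.length
      have hb : l.length - 1 < l.length := by omega
      have hdrop : l.drop l.length = [] := by simp
      have htk : l.take l.length = l := List.take_length
      have h1 : G (l.length+1) = 0 := by
        rw [hG, if_pos (by omega : l.length+1 = 0 ∨ l.length < l.length+1)]
      have h2 : G l.length = (-1:R)^(l.length-1) * f l.reverse := by
        rw [hG, if_neg (by omega : ¬ (l.length = 0 ∨ l.length < l.length)), hdrop,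
          shuffles_nil_right]
        simp only [Multiset.map_singleton, Multiset.sum_singleton]
        rw [List.getD_eq_getElem _ _ hb, ← List.reverse_concat']
        congr 3
        have := List.take_concat_get' l (l.length-1) hb
        rw [Nat.sub_add_cancel hkpos] at this
        rw [this, htk]
      rw [h1, h2, htk, hdrop, shuffles_nil_right, zero_sub]
      simp only [Multiset.map_singleton, Multiset.sum_singleton]
      have hpow : (-1:R)^l.length = -(-1:R)^(l.length-1) := by
        conv_lhs => rw [show l.length = (l.length-1)+1 by omega]
        rw [pow_succ]; ring
      rw [hpow]; ring
    · -- 0 < k < l.length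
      have hk1 : k - 1 < l.length := by omega
      have hkl : k < l.length := hklt
      have htake : (l.take k).reverse = l[k-1] :: (l.take (k-1)).reverse := by
        rw [← List.reverse_concat']
        congr 1
        have := List.take_concat_get' l (k-1) hk1
        rw [Nat.sub_add_cancel hkpos] at this
        rw [this]
      have hdrop : l.drop k = l[k] :: l.drop (k+1) := List.drop_eq_getElem_cons hkl
      have hGk1 : G (k+1) = (-1:R)^k *
          ((shuffles ((l.take k).reverse) (l.drop (k+1))).map
            fun x => f (l[k] :: x)).sum := by
        rw [hG, if_neg (by omega : ¬ (k+1 = 0 ∨ l.length < k+1))]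
        simp only [Nat.add_sub_cancel]
        rw [List.getD_eq_getElem _ _ hkl]
      have hGk : G k = (-1:R)^(k-1) *
          ((shuffles ((l.take (k-1)).reverse) (l.drop k)).map
            fun x => f (l[k-1] :: x)).sum := by
        rw [hG, if_neg (by omega : ¬ (k = 0 ∨ l.length < k))]
        rw [List.getD_eq_getElem _ _ hk1]
      rw [htake, hdrop, shuffles_cons_cons,
        Multiset.map_add, Multiset.sum_add, Multiset.map_map, Multiset.map_map,
        hGk1, hGk, htake, hdrop]
      simp only [Function.comp]
      have hpow : (-1:R)^(k-1) = -(-1:R)^k := by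
        conv_rhs => rw [show k = (k-1)+1 by omega]
        rw [pow_succ]; ring
      rw [hpow]
      ring
  rw [Finset.sum_congr rfl key, Finset.sum_range_sub]
  rw [hG, hG]
  simp

end tele
section rev
variable {S : Type*}

lemma Imap_rev_aux : ∀ (N : ℕ) (l : List S), l.length ≤ N → ∀ a b : S,
    Imap b l a = (-1 : IS S) ^ l.length * Imap a l.reverse b := by
  intro N
  induction N with
  | zero =>
    intro l h a b
    have : l = [] := List.eq_nil_of_length_eq_zero (Nat.le_zero.1 h)
    subst this
    simp [Imap_nil]
  | succ N ih =>
    intro l hlen a b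
    rcases eq_or_ne l [] with rfl | hl
    · simp [Imap_nil]
    have hm : 0 < l.length := List.length_pos_iff.2 hl
    have h0 : (0 : IS S) = ∑ k ∈ Finset.range (l.length + 1),
        Imap b (l.take k) a * Imap a (l.drop k) b := by
      rw [← Imap_comp b b a l, Imap_loop b l hl]
    have hterm : ∀ k ∈ Finset.range l.length,
        Imap b (l.take k) a * Imap a (l.drop k) b
          = (-1 : IS S) ^ k *
            ((shuffles ((l.take k).reverse) (l.drop k)).map fun x => Imap a x b).sum := by
      intro k hk
      rw [Finset.mem_range] at hk
      have hlt : (l.take k).length ≤ N := by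
        rw [List.length_take]; omega
      rw [ih (l.take k) hlt a b, List.length_take, Nat.min_eq_left (le_of_lt hk),
        mul_assoc, Imap_shuffle]
    rw [Finset.sum_range_succ, Finset.sum_congr rfl hterm, List.take_length,
      List.drop_length, Imap_nil, mul_one] at h0
    -- now use shuffle_rev_alt
    have hE := shuffle_rev_alt (fun x => Imap a x b) l hl
    rw [Finset.sum_range_succ, List.take_length, List.drop_length, shuffles_nil_right] at hE
    simp only [Multiset.map_singleton, Multiset.sum_singleton] at hE
    -- hE : ∑_{k<len} ... + (-1)^len * Imap a l.reverse b = 0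
    have := h0
    linear_combination -h0 - hE
end rev
section wzlem
variable {S : Type*}

lemma wz_cons (z : S) (n : ℕ) (b : S) (m : ℕ) (L : List (S × ℕ)) :
    wz z n ((b, m) :: L) = List.replicate n z ++ b :: wz z m L := by
  simp [wz]

lemma wz_concat (z : S) (n : ℕ) (L : List (S × ℕ)) (b : S) (m : ℕ) :
    wz z n (L ++ [(b, m)]) = wz z n L ++ b :: List.replicate m z := by
  simp [wz]

lemma rev_wz (z : S) : ∀ (k : ℕ) (b : ℕ → S) (n : ℕ → ℕ),
    (wz z (n 0) (List.ofFn fun i : Fin k => (b i.1, n (i.1+1)))).reverse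
      = wz z (n k) (List.ofFn fun j : Fin k => (b (k-1-j.1), n (k-1-j.1))) := by
  intro k
  induction k with
  | zero => intro b n; simp [wz]
  | succ k ih =>
    intro b n
    have h1 : (List.ofFn fun i : Fin (k+1) => (b i.1, n (i.1+1)))
        = (b 0, n 1) :: List.ofFn fun i : Fin k => (b (i.1+1), n ((i.1+1)+1)) := by
      rw [List.ofFn_succ]
      rfl
    rw [h1, wz_cons, List.reverse_append, List.reverse_cons, List.reverse_replicate]
    have h2 := ih (fun i => b (i+1)) (fun i => n (i+1))
    rw [h2]
    have h3 : (List.ofFn fun j : Fin (k+1) => (b (k+1-1-j.1), n (k+1-1-j.1)))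
        = (List.ofFn fun j : Fin k => (b (k-1-j.1+1), n (k-1-j.1+1))) ++ [(b 0, n 0)] := by
      rw [List.ofFn_succ', List.concat_eq_append]
      congr 1
      · congr 1
        funext j
        have hj : j.1 < k := j.2
        simp only [Fin.coe_castSucc]
        congr 2 <;> omega
      · have e : k + 1 - 1 - k = 0 := by omega
        simp [Fin.last, e]
    rw [h3, wz_concat]
    simp
end wzlem
section lenlem
variable {S : Type*}

lemma length_wz_ofFn (z : S) : ∀ (k : ℕ) (b : ℕ → S) (n : ℕ → ℕ),
    (wz z (n 0) (List.ofFn fun i : Fin k => (b i.1, n (i.1+1)))).length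
      = k + ∑ i ∈ Finset.range (k+1), n i := by
  intro k
  induction k with
  | zero => intro b n; simp [wz]
  | succ k ih =>
    intro b n
    have h1 : (List.ofFn fun i : Fin (k+1) => (b i.1, n (i.1+1)))
        = (b 0, n 1) :: List.ofFn fun i : Fin k => (b (i.1+1), n ((i.1+1)+1)) := by
      rw [List.ofFn_succ]; rfl
    rw [h1, wz_cons]
    have h2 := ih (fun i => b (i+1)) (fun i => n (i+1))
    rw [List.length_append, List.length_cons, h2, List.length_replicate]
    rw [Finset.sum_range_succ' (fun i => n i) (k+1)]
    omega
end lenlem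
lemma Imap_rev {S : Type*} (l : List S) (a b : S) :
    Imap b l a = (-1 : IS S) ^ l.length * Imap a l.reverse b :=
  Imap_rev_aux l.length l le_rfl a b

theorem Imap_reverse_generating_series {S : Type*} (z : S) (r : ℕ) (a : Fin (r + 1) → S) :
    -- m := r + 1 ≥ 1, and a 0, …, a r are a₁, …, a_m
    (∀ n : Fin (r + 1) → ℕ,
      Imap (a 0) (wz z (n 0) (List.ofFn fun i : Fin r => (a i.succ, n i.succ))) z =
        (-1 : IS S) ^ (r + ∑ i, n i) *
          Imap z (wz z (n (Fin.last r))
            (List.ofFn fun β : Fin r =>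
              (a ⟨r - (β : ℕ), by omega⟩, n ⟨r - 1 - (β : ℕ), by omega⟩))) (a 0)) ∧
    -- the particular case m = 1
    (∀ (x : S) (n : ℕ),
      Imap x (List.replicate n z) z = (-1 : IS S) ^ n * Imap z (List.replicate n z) x) := by

  constructor
  · intro n
    obtain ⟨A, hA⟩ : ∃ A : ℕ → S, ∀ i : Fin (r+1), A i.1 = a i :=
      ⟨fun i => a ⟨min i r, by omega⟩,
       fun i => congrArg a (Fin.ext (by have := i.2; simp; omega))⟩
    obtain ⟨M, hM⟩ : ∃ M : ℕ → ℕ, ∀ i : Fin (r+1), M i.1 = n i :=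
      ⟨fun i => n ⟨min i r, by omega⟩,
       fun i => congrArg n (Fin.ext (by have := i.2; simp; omega))⟩
    have e0 : n 0 = M 0 := by
      have := hM 0; simp only [Fin.val_zero] at this; exact this.symm
    have e1 : (fun i : Fin r => (a i.succ, n i.succ))
        = fun i : Fin r => (A (i.1+1), M (i.1+1)) := by
      funext i
      rw [← Fin.val_succ, hA i.succ, hM i.succ]
    have e2 : n (Fin.last r) = M r := by
      rw [← hM (Fin.last r), Fin.val_last]
    have e3 : (fun β : Fin r =>
          ((a ⟨r - (β : ℕ), by omega⟩ : S), (n ⟨r - 1 - (β : ℕ), by omega⟩ : ℕ)))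
        = fun j : Fin r => (A (r-1-(j:ℕ)+1), M (r-1-(j:ℕ))) := by
      funext j
      have hj : j.1 < r := j.2
      have h1 : A (r-1-(j:ℕ)+1) = a ⟨r - (j:ℕ), by omega⟩ := by
        have := hA ⟨r - (j:ℕ), by omega⟩
        simp only [] at this
        rw [← this]
        congr 1
        omega
      have h2 : M (r-1-(j:ℕ)) = n ⟨r - 1 - (j:ℕ), by omega⟩ := by
        have := hM ⟨r - 1 - (j:ℕ), by omega⟩
        simp only [] at this
        rw [← this]
      rw [h1, h2]
    rw [e0, e1, e2, e3]
    have h2 := rev_wz z r (fun i => A (i+1)) M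
    have hlen := length_wz_ofFn z r (fun i => A (i+1)) M
    rw [Imap_rev]
    rw [h2]
    rw [hlen]
    have e5 : ∑ i ∈ Finset.range (r+1), M i = ∑ i, n i := by
      rw [← Fin.sum_univ_eq_sum_range M (r+1)]
      exact Finset.sum_congr rfl fun i _ => hM i
    rw [e5]
  · intro x n
    have h := Imap_rev (List.replicate n z) z x
    rw [List.length_replicate, List.reverse_replicate] at h
    exact h
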